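/- Degeneration of the stable-manifold parametrization: Let λ be a primitive q-th root of unity and, for (c, a) ∈ P_λ with 0 < |a| < 1, let F_a : ℂ → ℂ² be the parametrization of the strong stable manifold given by F_a(z) = lim_{m→∞} H_{c,a}^{−∘m}(q_a + μ^m·v·z) with μ = −a²/λ, v = (μ/a, 1). Then F_a converges to F₀(z) = (λ/2, z) uniformly on compact subsets of ℂ as a → 0: for every compact set K ⊂ ℂ and every ε > 0 there exists δ > 0 such that for all a with 0 < |a| < δ and (c, a) ∈ P_λ, and all z ∈ K, one has ‖F_a(z) − (λ/2, z)‖ < ε. -/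

import Mathlib

open Metric Filter Topology Set

noncomputable section

/-- The complex Hénon map `H_{c,a}(x,y) = (x² + c + a y, a x)`. -/
def henon (c a : ℂ) : ℂ × ℂ → ℂ × ℂ := fun P => (P.1 ^ 2 + c + a * P.2, a * P.1)

/-- The inverse Hénon map. -/
def henonInv (c a : ℂ) : ℂ × ℂ → ℂ × ℂ :=
  fun P => (P.2 / a, (P.1 - (P.2 / a) ^ 2 - c) / a)

/-- The parameter `c = c(a)` on the curve `P_λ`. -/
def cofLambda (lam a : ℂ) : ℂ :=
  (1 - a ^ 2) * (lam / 2 - a ^ 2 / (2 * lam)) - (lam / 2 - a ^ 2 / (2 * lam)) ^ 2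

/-- The semi-parabolic fixed point `q_a = (λ/2 - a²/(2λ))·(1, a)`. -/
def fixedPt (lam a : ℂ) : ℂ × ℂ :=
  (lam / 2 - a ^ 2 / (2 * lam), a * (lam / 2 - a ^ 2 / (2 * lam)))

/-- Auxiliary backward-orbit sequence: `x (k+2) = (x k - x (k+1)² - c)/a²`. -/
noncomputable def xSeq (x0 x1 c a : ℂ) : ℕ → ℂ
  | 0 => x0
  | 1 => x1
  | (k+2) => (xSeq x0 x1 c a k - (xSeq x0 x1 c a (k+1))^2 - c)/a^2

lemma henonInv_iter (c a : ℂ) (ha : a ≠ 0) (x0 x1 : ℂ) (k : ℕ) :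
    (henonInv c a)^[k] (x0, a * x1) = (xSeq x0 x1 c a k, a * xSeq x0 x1 c a (k+1)) := by
  induction k with
  | zero => simp [xSeq]
  | succ n ih =>
    rw [Function.iterate_succ_apply', ih]
    show ((a * xSeq x0 x1 c a (n+1)) / a,
      (xSeq x0 x1 c a n - ((a * xSeq x0 x1 c a (n+1)) / a)^2 - c)/a) = _
    rw [mul_div_cancel_left₀ _ ha]
    refine Prod.ext rfl ?_
    show _ = a * xSeq x0 x1 c a (n+2)
    rw [show xSeq x0 x1 c a (n+2) = (xSeq x0 x1 c a n - (xSeq x0 x1 c a (n+1))^2 - c)/a^2 from rfl]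
    field_simp

lemma keyU (lam mu a xs c M w xk xk1 xk2 : ℂ)
    (hprod : lam * mu = -a^2) (hsum : lam + mu = 2*xs)
    (hc : c = xs - xs^2 - a^2*xs)
    (hx2 : a^2 * xk2 = xk - xk1^2 - c) :
    a^2 * (lam * (xk2 - xs - M*w) - (xk1 - xs - mu*M*w))
      = -lam * ((lam * (xk1 - xs - mu*M*w) - (xk - xs - mu^2*M*w)) + (xk1 - xs)^2) := by
  linear_combination lam * hx2 - lam * hc + ((xs - xk1) + (mu - lam)*M*w) * hprod +
    lam*(xk1 - xs) * hsum

lemma keyS (lam mu a xs c M w xk xk1 xk2 : ℂ)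
    (hprod : lam * mu = -a^2) (hsum : lam + mu = 2*xs)
    (hc : c = xs - xs^2 - a^2*xs)
    (hx2 : a^2 * xk2 = xk - xk1^2 - c) :
    a^2 * (mu * (xk2 - xs - M*w) - (xk1 - xs - mu*M*w))
      = -mu * ((mu * (xk1 - xs - mu*M*w) - (xk - xs - mu^2*M*w)) + (xk1 - xs)^2) := by
  linear_combination mu * hx2 - mu * hc + (xs - xk1) * hprod + mu*(xk1 - xs) * hsum

set_option maxHeartbeats 2000000 in
/-- **Degeneration of the stable-manifold parametrization.** As `a → 0` along `P_λ`, the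
parametrizations `F_a(z) = lim_m H^{-∘m}(q_a + μ^m v z)` of the strong stable manifolds
converge to `F₀(z) = (λ/2, z)` uniformly on compact subsets of `ℂ`. -/
theorem stable_manifold_degeneration (q : ℕ) (hq : 0 < q) (lam : ℂ)
    (hlam : IsPrimitiveRoot lam q) (K : Set ℂ) (hK : IsCompact K) (ε : ℝ) (hε : 0 < ε) :
    ∃ δ > 0, ∀ a c : ℂ, 0 < ‖a‖ → ‖a‖ < δ → c = cofLambda lam a →
      ∀ F : ℂ → ℂ × ℂ,
        (∀ z : ℂ, Filter.Tendsto
          (fun m : ℕ => (henonInv c a)^[m]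
            (fixedPt lam a + ((-a ^ 2 / lam) ^ m * ((-a ^ 2 / lam) / a) * z,
              (-a ^ 2 / lam) ^ m * z)))
          Filter.atTop (nhds (F z))) →
        ∀ z ∈ K, ‖F z - (lam / 2, z)‖ < ε := by
  obtain ⟨R0, hR0⟩ := hK.isBounded.subset_closedBall 0
  set R : ℝ := max R0 1 with hRdef
  have hR1 : (1:ℝ) ≤ R := le_max_right _ _
  set C : ℝ := 33*R^2 + R + 2 with hCdef
  have hCpos : (0:ℝ) < C := by nlinarith
  refine ⟨min (1/C) (ε/(2*C)), lt_min (by positivity) (by positivity), ?_⟩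
  intro a c hapos haδ hc F hF z hz
  -- basic setup
  have hlam1 : ‖lam‖ = 1 :=
    Complex.norm_eq_one_of_pow_eq_one hlam.pow_eq_one hq.ne'
  have hlam1' : ‖lam‖ = 1 := hlam1
  have hlam0 : lam ≠ 0 := by
    intro h; rw [h] at hlam1; simp at hlam1
  have ha0 : a ≠ 0 := by
    intro h; rw [h] at hapos; simp at hapos
  set α : ℝ := ‖a‖ with hαdef
  have hαnorm : ‖a‖ = α := rfl
  have hα0 : (0:ℝ) < α := hapos
  have hzR : ‖z‖ ≤ R := by
    have h1 : z ∈ closedBall (0:ℂ) R0 := hR0 hz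
    have h2 : ‖z‖ ≤ R0 := by simpa using mem_closedBall_zero_iff.mp h1
    exact h2.trans (le_max_left _ _)
  clear_value α
  have hα1C : α < 1/C := lt_of_lt_of_le haδ (min_le_left _ _)
  have hαεC : α < ε/(2*C) := lt_of_lt_of_le haδ (min_le_right _ _)
  have hαC1 : α * C < 1 := (lt_div_iff₀ hCpos).mp hα1C
  have hαle1 : α ≤ 1 := by nlinarith
  have hα2 : α^2 ≤ 1/2 := by nlinarith
  have h32 : 32*R*α ≤ 1 := by nlinarith
  have hαCε : α * C < ε := by
    have : α * (2*C) < ε := (lt_div_iff₀ (by positivity)).mp hαεC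
    nlinarith
  -- the eigenvalue μ and fixed point coordinate
  set mu : ℂ := -a^2/lam with hmu
  set xs : ℂ := lam/2 - a^2/(2*lam) with hxs
  set w : ℂ := z/a with hw
  have hmu0 : mu ≠ 0 := by
    rw [hmu]; exact div_ne_zero (neg_ne_zero.mpr (pow_ne_zero _ ha0)) hlam0
  have habs_mu : ‖mu‖ = α^2 := by
    rw [hmu, norm_div, norm_neg, norm_pow, hlam1', hαnorm, div_one]
  have hprod : lam * mu = -a^2 := by
    rw [hmu]; field_simp
  have hsum : lam + mu = 2*xs := by
    rw [hmu, hxs]; field_simp; ring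
  have hcc : c = xs - xs^2 - a^2*xs := by
    rw [hc, cofLambda, hxs]; ring
  have hwR : ‖w‖ ≤ R/α := by
    rw [hw, norm_div, hαnorm]
    gcongr
  have hlm : 1/2 ≤ ‖lam - mu‖ := by
    have h1 : ‖lam‖ - ‖mu‖ ≤ ‖lam - mu‖ := norm_sub_norm_le _ _
    rw [hlam1', habs_mu] at h1
    linarith
  have hlm0 : lam - mu ≠ 0 := by
    intro h; rw [h] at hlm; simp at hlm; linarith
  have hxs1 : ‖xs‖ ≤ 1 := by
    rw [hxs]
    calc ‖lam/2 - a^2/(2*lam)‖ ≤ ‖lam/2‖ + ‖a^2/(2*lam)‖ := norm_sub_le _ _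
    _ = 1/2 + α^2/2 := by
        rw [norm_div, norm_div, hlam1', norm_pow, hαnorm, norm_mul, hlam1']
        norm_num
    _ ≤ 1 := by nlinarith
  clear_value mu xs w
  -- the main per-m bound
  have key : ∀ m : ℕ, ‖(henonInv c a)^[m]
      (fixedPt lam a + (mu ^ m * (mu / a) * z, mu ^ m * z)) - (lam/2, z)‖ ≤ α*C := by
    intro m
    have harg : fixedPt lam a + (mu ^ m * (mu / a) * z, mu ^ m * z)
        = (xs + mu^(m+1)*w, a*(xs + mu^m*w)) := by
      rw [fixedPt, Prod.mk_add_mk, Prod.mk.injEq]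
      constructor
      · rw [hxs, pow_succ, hw]; ring
      · have haz : a * (z/a) = z := by field_simp
        rw [hxs, hw]
        linear_combination (-(mu ^ m)) * haz
    rw [harg, henonInv_iter c a ha0 _ _ m]
    set x : ℕ → ℂ := xSeq (xs + mu^(m+1)*w) (xs + mu^m*w) c a with hxdef
    have hxrec : ∀ k : ℕ, a^2 * x (k+2) = x k - (x (k+1))^2 - c := by
      intro k
      have : x (k+2) = (x k - (x (k+1))^2 - c)/a^2 := rfl
      rw [this]; field_simp
    set f : ℕ → ℂ := fun k => x k - xs - mu^(m+1-k)*w with hfdef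
    set U : ℕ → ℂ := fun k => lam * f (k+1) - f k with hUdef
    set S : ℕ → ℂ := fun k => mu * f (k+1) - f k with hSdef
    have hfk : ∀ k : ℕ, f k = x k - xs - mu^(m+1-k)*w := fun k => rfl
    have hUk : ∀ k : ℕ, U k = lam * f (k+1) - f k := fun k => rfl
    have hSk : ∀ k : ℕ, S k = mu * f (k+1) - f k := fun k => rfl
    have hx0 : x 0 = xs + mu^(m+1)*w := rfl
    have hx1 : x 1 = xs + mu^m*w := rfl
    clear_value x f U S
    -- recurrences for U and S
    have hUrec : ∀ k : ℕ, k + 1 ≤ m →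
        a^2 * U (k+1) = -lam * (U k + (x (k+1) - xs)^2) := by
      intro k hk
      have h1 : m + 1 - k = (m - 1 - k) + 2 := by omega
      have h2 : m + 1 - (k+1) = (m - 1 - k) + 1 := by omega
      have h3 : m + 1 - (k+2) = m - 1 - k := by omega
      have hkey := keyU lam mu a xs c (mu^(m-1-k)) w (x k) (x (k+1)) (x (k+2))
        hprod hsum hcc (hxrec k)
      rw [hUk (k+1), hUk k, hfk (k+2), hfk (k+1), hfk k, h1, h2, h3]
      linear_combination hkey
    have hSrec : ∀ k : ℕ, k + 1 ≤ m →
        a^2 * S (k+1) = -mu * (S k + (x (k+1) - xs)^2) := by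
      intro k hk
      have h1 : m + 1 - k = (m - 1 - k) + 2 := by omega
      have h2 : m + 1 - (k+1) = (m - 1 - k) + 1 := by omega
      have h3 : m + 1 - (k+2) = m - 1 - k := by omega
      have hkey := keyS lam mu a xs c (mu^(m-1-k)) w (x k) (x (k+1)) (x (k+2))
        hprod hsum hcc (hxrec k)
      rw [hSk (k+1), hSk k, hfk (k+2), hfk (k+1), hfk k, h1, h2, h3]
      linear_combination hkey
    -- recovery of f from U and S
    have hfrec1 : ∀ k : ℕ, f (k+1) = (U k - S k)/(lam - mu) := by
      intro k
      rw [eq_div_iff hlm0, hUk k, hSk k]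
      ring
    have hfrec0 : ∀ k : ℕ, f k = (mu * U k - lam * S k)/(lam - mu) := by
      intro k
      rw [eq_div_iff hlm0, hUk k, hSk k]
      ring
    -- bound for f (k+1) given bounds on U k, S k
    have hfb : ∀ k : ℕ, ∀ B : ℝ, 0 ≤ B → ‖U k‖ ≤ B → ‖S k‖ ≤ B →
        ‖f (k+1)‖ ≤ 4*B ∧ ‖f k‖ ≤ 4*B := by
      intro k B hB hU hS
      constructor
      · rw [hfrec1 k, norm_div]
        have h1 : ‖U k - S k‖ ≤ 2*B := le_trans (norm_sub_le _ _) (by linarith)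
        calc ‖U k - S k‖/‖lam - mu‖ ≤ (2*B)/(1/2) :=
              div_le_div₀ (by linarith) h1 one_half_pos hlm
        _ = 4*B := by ring
      · rw [hfrec0 k, norm_div]
        have h1 : ‖mu * U k - lam * S k‖ ≤ 2*B := by
          calc ‖mu * U k - lam * S k‖ ≤ ‖mu * U k‖ + ‖lam * S k‖ := norm_sub_le _ _
          _ = α^2*‖U k‖ + ‖S k‖ := by rw [norm_mul, norm_mul, hlam1', habs_mu, one_mul]
          _ ≤ 2*B := by nlinarith
        calc ‖mu * U k - lam * S k‖/‖lam - mu‖ ≤ (2*B)/(1/2) :=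
              div_le_div₀ (by linarith) h1 one_half_pos hlm
        _ = 4*B := by ring
    -- base facts about x 0, x 1 (before values are cleared these are definitional)
    -- the inductive invariant on U and S
    have hpow_le : ∀ i j : ℕ, i ≤ j → α^j ≤ α^i :=
      fun i j h => pow_le_pow_of_le_one hα0.le hαle1 h
    have hinv : ∀ k, k ≤ m → ‖U k‖ ≤ 8*R^2*α^(4*(m-k)) ∧ ‖S k‖ ≤ 8*R^2*α^(4*(m-k)+2) := by
      intro k
      induction k with
      | zero =>
        intro _
        have hf0 : f 0 = 0 := by rw [hfk 0, hx0, Nat.sub_zero]; ring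
        have hf1 : f 1 = 0 := by rw [hfk 1, hx1, Nat.add_sub_cancel]; ring
        have hU0 : U 0 = 0 := by rw [hUk 0, hf0, hf1]; ring
        have hS0 : S 0 = 0 := by rw [hSk 0, hf0, hf1]; ring
        rw [hU0, hS0, norm_zero]
        constructor <;> positivity
      | succ k ih =>
        intro hk1
        have hk : k ≤ m := by omega
        obtain ⟨hUb, hSb⟩ := ih hk
        set E : ℕ := m - (k+1) with hE
        have hmk : m - k = E + 1 := by omega
        rw [hmk] at hUb hSb
        have hB0 : (0:ℝ) ≤ 8*R^2*α^(4*(E+1)) := by positivity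
        have hSb' : ‖S k‖ ≤ 8*R^2*α^(4*(E+1)) := by
          refine hSb.trans ?_
          have h2 := hpow_le (4*(E+1)) (4*(E+1)+2) (by omega)
          nlinarith [sq_nonneg R]
        obtain ⟨hfk1b, -⟩ := hfb k _ hB0 hUb hSb'
        -- bound on e := x (k+1) - xs
        have hxe : x (k+1) - xs = f (k+1) + mu^(E+1)*w := by
          have h1 := hfk (k+1)
          rw [show m + 1 - (k+1) = E + 1 from by omega] at h1
          linear_combination (-1 : ℂ)*h1
        have hno : ‖mu^(E+1)*w‖ ≤ R * α^(2*E+1) := by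
          rw [norm_mul, norm_pow, habs_mu]
          calc (α^2)^(E+1) * ‖w‖ ≤ (α^2)^(E+1) * (R/α) :=
                mul_le_mul_of_nonneg_left hwR (by positivity)
          _ = R * α^(2*E+1) := by
              rw [← pow_mul, show 2*(E+1) = (2*E+1)+1 from by omega, pow_succ]
              field_simp
        have hfk1R : ‖f (k+1)‖ ≤ R * α^(2*E+1) := by
          have h1 : α^(4*(E+1)) = α^(2*E+1) * α^(2*E+3) := by
            rw [← pow_add]; congr 1; omega
          have h2 : α^(2*E+3) ≤ α := (hpow_le 1 (2*E+3) (by omega)).trans_eq (pow_one α)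
          have h3 : 32*R*α^(2*E+3) ≤ 1 := by
            have h4 : 32*R*α^(2*E+3) ≤ 32*R*α := by
              have := mul_le_mul_of_nonneg_left h2 (show (0:ℝ) ≤ 32*R by linarith)
              linarith
            linarith
          calc ‖f (k+1)‖ ≤ 4*(8*R^2*α^(4*(E+1))) := hfk1b
          _ = (32*R*α^(2*E+3))*(R*α^(2*E+1)) := by rw [h1]; ring
          _ ≤ 1*(R*α^(2*E+1)) := mul_le_mul_of_nonneg_right h3 (by positivity)
          _ = R*α^(2*E+1) := one_mul _
        have he : ‖x (k+1) - xs‖ ≤ 2*R*α^(2*E+1) := by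
          rw [hxe]
          calc ‖f (k+1) + mu^(E+1)*w‖ ≤ ‖f (k+1)‖ + ‖mu^(E+1)*w‖ := norm_add_le _ _
          _ ≤ 2*R*α^(2*E+1) := by linarith
        have he2 : ‖(x (k+1) - xs)^2‖ ≤ 4*R^2*α^(4*E+2) := by
          rw [norm_pow]
          calc ‖x (k+1) - xs‖^2 ≤ (2*R*α^(2*E+1))^2 :=
                pow_le_pow_left₀ (norm_nonneg _) he 2
          _ = 4*R^2*α^(4*E+2) := by
              rw [mul_pow, mul_pow, ← pow_mul, show (2*E+1)*2 = 4*E+2 from by omega]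
              ring
        have hx4 : α^4 ≤ (1/2)*α^2 := by nlinarith [sq_nonneg α, hα2]
        have hα2pos : (0:ℝ) < α^2 := by positivity
        constructor
        · -- U step
          have h0 := hUrec k hk1
          have h4 : α^2*‖U (k+1)‖ = ‖U k + (x (k+1) - xs)^2‖ := by
            have hnU : ‖a^2 * U (k+1)‖ = α^2*‖U (k+1)‖ := by
              rw [norm_mul, norm_pow, hαnorm]
            have hnR : ‖-lam * (U k + (x (k+1) - xs)^2)‖
                = ‖U k + (x (k+1) - xs)^2‖ := by
              rw [norm_mul, norm_neg, hlam1', one_mul]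
            rw [← hnU, h0, hnR]
          have h5 : α^2*‖U (k+1)‖ ≤ α^2*(8*R^2*α^(4*E)) := by
            rw [h4]
            calc ‖U k + (x (k+1) - xs)^2‖
                ≤ ‖U k‖ + ‖(x (k+1) - xs)^2‖ := norm_add_le _ _
            _ ≤ 8*R^2*α^(4*(E+1)) + 4*R^2*α^(4*E+2) := by linarith
            _ ≤ α^2*(8*R^2*α^(4*E)) := by
                rw [show 4*(E+1) = 4*E+4 from by omega, pow_add, pow_add]
                have hy : (0:ℝ) ≤ R^2*α^(4*E) := by positivity
                nlinarith [mul_le_mul_of_nonneg_left hx4 (show (0:ℝ) ≤ 8*(R^2*α^(4*E)) by positivity)]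
          exact (mul_le_mul_iff_right₀ hα2pos).mp h5
        · -- S step
          have h0 := hSrec k hk1
          have h4 : α^2*‖S (k+1)‖ = α^2*‖S k + (x (k+1) - xs)^2‖ := by
            have hnS : ‖a^2 * S (k+1)‖ = α^2*‖S (k+1)‖ := by
              rw [norm_mul, norm_pow, hαnorm]
            have hnR : ‖-mu * (S k + (x (k+1) - xs)^2)‖
                = α^2*‖S k + (x (k+1) - xs)^2‖ := by
              rw [norm_mul, norm_neg, habs_mu]
            rw [← hnS, h0, hnR]
          have h6 : ‖S (k+1)‖ = ‖S k + (x (k+1) - xs)^2‖ :=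
            mul_left_cancel₀ (ne_of_gt hα2pos) h4
          rw [h6]
          calc ‖S k + (x (k+1) - xs)^2‖
              ≤ ‖S k‖ + ‖(x (k+1) - xs)^2‖ := norm_add_le _ _
          _ ≤ (8*R^2*α^(4*(E+1)+2)) + 4*R^2*α^(4*E+2) := by linarith
          _ ≤ 8*R^2*α^(4*E+2) := by
              rw [show 4*(E+1)+2 = (4*E+2)+4 from by omega, pow_add]
              nlinarith [mul_le_mul_of_nonneg_left
                (show α^4 ≤ (1/2:ℝ) by nlinarith [sq_nonneg α, hα2, hx4])
                (show (0:ℝ) ≤ 8*(R^2*α^(4*E+2)) by positivity)]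
    -- conclude: bounds at k = m
    obtain ⟨hUm, hSm⟩ := hinv m le_rfl
    rw [Nat.sub_self, Nat.mul_zero, pow_zero, mul_one] at hUm
    rw [Nat.sub_self, Nat.mul_zero, Nat.zero_add] at hSm
    -- hUm : ‖U m‖ ≤ 8*R^2 ; hSm : ‖S m‖ ≤ 8*R^2*α^2
    have hSm' : ‖S m‖ ≤ 8*R^2 := by
      nlinarith [mul_le_mul_of_nonneg_left hα2 (show (0:ℝ) ≤ 8*R^2 by positivity), sq_nonneg R]
    obtain ⟨hfm1, -⟩ := hfb m _ (by positivity) hUm hSm'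
    -- sharper bound for ‖f m‖
    have hfm0 : ‖f m‖ ≤ 32*R^2*α^2 := by
      rw [hfrec0 m, norm_div]
      have h1 : ‖mu * U m - lam * S m‖ ≤ 16*R^2*α^2 := by
        calc ‖mu * U m - lam * S m‖ ≤ ‖mu * U m‖ + ‖lam * S m‖ := norm_sub_le _ _
        _ = α^2*‖U m‖ + ‖S m‖ := by rw [norm_mul, norm_mul, hlam1', habs_mu, one_mul]
        _ ≤ 16*R^2*α^2 := by
            nlinarith [mul_le_mul_of_nonneg_left hUm (sq_nonneg α)]
      calc ‖mu * U m - lam * S m‖/‖lam - mu‖ ≤ (16*R^2*α^2)/(1/2) :=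
            div_le_div₀ (by positivity) h1 one_half_pos hlm
      _ = 32*R^2*α^2 := by ring
    -- first coordinate
    have hxm : x m - lam/2 = f m + mu*w - a^2/(2*lam) := by
      have h1 := hfk m
      rw [show m+1-m = 1 from by omega, pow_one] at h1
      linear_combination (-1 : ℂ)*h1 + hxs
    have hmw : ‖mu*w‖ ≤ R*α := by
      rw [norm_mul, habs_mu]
      calc α^2*‖w‖ ≤ α^2*(R/α) := mul_le_mul_of_nonneg_left hwR (by positivity)
      _ = R*α := by field_simp
    have ha2l : ‖a^2/(2*lam)‖ = α^2/2 := by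
      rw [norm_div, norm_pow, hαnorm, norm_mul, hlam1', mul_one]
      norm_num
    have h1st : ‖x m - lam/2‖ ≤ α*C := by
      rw [hxm, hCdef]
      calc ‖f m + mu*w - a^2/(2*lam)‖
          ≤ ‖f m + mu*w‖ + ‖a^2/(2*lam)‖ := norm_sub_le _ _
      _ ≤ ‖f m‖ + ‖mu*w‖ + ‖a^2/(2*lam)‖ := by
          have := norm_add_le (f m) (mu*w); linarith
      _ ≤ 32*R^2*α^2 + R*α + α^2/2 := by rw [ha2l]; linarith
      _ ≤ α*(33*R^2 + R + 2) := by nlinarith [sq_nonneg R, hα0.le, hαle1, hR1]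
    -- second coordinate
    have h2nd : ‖a*(x (m+1)) - z‖ ≤ α*C := by
      have h1 := hfk (m+1)
      rw [show m+1-(m+1) = 0 from by omega, pow_zero, one_mul] at h1
      have haw : a*w = z := by rw [hw]; field_simp
      have hxw : a*(x (m+1)) - z = a*xs + a*f (m+1) := by
        linear_combination (-a)*h1 + haw
      rw [hxw, hCdef]
      calc ‖a*xs + a*f (m+1)‖ ≤ ‖a*xs‖ + ‖a*f (m+1)‖ := norm_add_le _ _
      _ = α*‖xs‖ + α*‖f (m+1)‖ := by rw [norm_mul, norm_mul, hαnorm]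
      _ ≤ α*1 + α*(32*R^2) := by
          have g1 := mul_le_mul_of_nonneg_left hxs1 hα0.le
          have g2 := mul_le_mul_of_nonneg_left hfm1 hα0.le
          linarith
      _ ≤ α*(33*R^2 + R + 2) := by nlinarith [hα0.le, hR1]
    have hsplit : (x m, a * x (m+1)) - (lam/2, z) = (x m - lam/2, a*(x (m+1)) - z) := rfl
    rw [hsplit, Prod.norm_def]
    exact max_le h1st h2nd
  -- pass to the limit
  have hlim : Tendsto (fun m : ℕ => ‖(henonInv c a)^[m]
      (fixedPt lam a + (mu ^ m * (mu / a) * z, mu ^ m * z)) - (lam/2, z)‖)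
      atTop (nhds ‖F z - (lam/2, z)‖) := ((hF z).sub tendsto_const_nhds).norm
  have hle : ‖F z - (lam/2, z)‖ ≤ α*C := le_of_tendsto' hlim key
  exact lt_of_le_of_lt hle hαCε
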